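/- Let φ : ℂⁿ → ℂⁿ be a smooth map with φ(0) = 0 and φ(W) ⊆ W. Let U ⊆ ℝ² be an open neighborhood of 0, let ℓ ≥ 1, and let f : U → ℂⁿ be a smooth map with f(0) = 0 such that ∂^{i+j}f/∂s^i∂t^j(0) ∈ W for all i, j ≥ 0 with 1 ≤ i+j ≤ ℓ−1. Then ∂^ℓ(φ∘f)/∂s^ℓ(0) − Dφ(0)(∂^ℓf/∂s^ℓ(0)) ∈ W, where Dφ(0) denotes the (real) derivative of φ at 0; that is, ∂^ℓ(φ∘f)/∂s^ℓ(0) and Dφ(0)(∂^ℓf/∂s^ℓ(0)) have the same image in the quotient ℂⁿ/W. -/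

import Mathlib

/-- Partial derivative in the `s`-direction of a map `ℝ² → E`. -/
noncomputable def pS {E : Type*} [NormedAddCommGroup E] [NormedSpace ℝ E]
    (f : ℝ × ℝ → E) : ℝ × ℝ → E :=
  fun z => fderiv ℝ f z (1, 0)

/-- Partial derivative in the `t`-direction of a map `ℝ² → E`. -/
noncomputable def pT {E : Type*} [NormedAddCommGroup E] [NormedSpace ℝ E]
    (f : ℝ × ℝ → E) : ℝ × ℝ → E :=
  fun z => fderiv ℝ f z (0, 1)

/-- The iterated partial derivative `∂^{i+j} f / ∂s^i ∂t^j`. -/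
noncomputable def pD {E : Type*} [NormedAddCommGroup E] [NormedSpace ℝ E]
    (f : ℝ × ℝ → E) (i j : ℕ) : ℝ × ℝ → E :=
  pS^[i] (pT^[j] f)

/-- The real subspace `W = ℂᵏ × {0} ⊆ ℂⁿ`. -/
def Wk (n k : ℕ) : Set (Fin n → ℂ) := {x | ∀ i : Fin n, k ≤ (i : ℕ) → x i = 0}

section Aux
open Set Function

lemma Fin.strictMono_eq_id {m : ℕ} {f : Fin m → Fin m} (hf : StrictMono f) : f = id := by
  funext i
  exact le_antisymm
    (@StrictMono.apply_le (Fin m) _ (inferInstance : WellFoundedGT (Fin m)) _ hf i)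
    (@StrictMono.le_apply (Fin m) _ (inferInstance : WellFoundedLT (Fin m)) _ hf i)

/-- The one-block ordered finpartition of `Fin ℓ`. -/
def OrderedFinpartition.single (ℓ : ℕ) (h : 0 < ℓ) : OrderedFinpartition ℓ where
  length := 1
  partSize _ := ℓ
  partSize_pos _ := h
  emb _ := id
  emb_strictMono _ := strictMono_id
  parts_strictMono := Subsingleton.strictMono _
  disjoint := by
    intro a _ b _ hab
    exact absurd (Subsingleton.elim a b) hab
  cover x := ⟨0, x, rfl⟩

lemma OrderedFinpartition.sum_partSize {ℓ : ℕ} (c : OrderedFinpartition ℓ) :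
    ∑ m, c.partSize m = ℓ := by
  have := c.sum_sigma_eq_sum (fun _ => (1 : ℕ))
  simpa using this

lemma OrderedFinpartition.eq_single {ℓ : ℕ} (h : 0 < ℓ) (c : OrderedFinpartition ℓ)
    (hc : c.length = 1) : c = OrderedFinpartition.single ℓ h := by
  obtain ⟨len, ps, pspos, emb, hemb, hparts, hdisj, hcover⟩ := c
  dsimp only at hc
  subst hc
  have hps : ps = fun _ => ℓ := by
    funext m
    have hm : m = 0 := Subsingleton.elim m 0
    subst hm
    have hsum : ∑ m, ps m = ℓ :=
      OrderedFinpartition.sum_partSize ⟨1, ps, pspos, emb, hemb, hparts, hdisj, hcover⟩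
    simpa using hsum
  subst hps
  have he : emb = fun _ => id := by
    funext m
    have hm : m = 0 := Subsingleton.elim m 0
    subst hm
    exact Fin.strictMono_eq_id (hemb 0)
  subst he
  rfl

/-- Iterated directional derivative in direction `(1,0)` equals Taylor coefficient applied to
the constant vector. -/
lemma pS_iterate_eq_taylor {F : Type*} [NormedAddCommGroup F] [NormedSpace ℝ F]
    {U : Set (ℝ × ℝ)} (hU : IsOpen U) {g : ℝ × ℝ → F}
    {P : ℝ × ℝ → FormalMultilinearSeries ℝ (ℝ × ℝ) F}
    (hP : HasFTaylorSeriesUpToOn (⊤ : ℕ∞) g P U) :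
    ∀ m : ℕ, ∀ x ∈ U, pS^[m] g x = P x m (fun _ => (1, 0)) := by
  intro m
  induction m with
  | zero =>
    intro x hx
    rw [Function.iterate_zero, id_eq, hP.zero_eq' hx]
    simp
  | succ m ih =>
    intro x hx
    have hmem : U ∈ nhds x := hU.mem_nhds hx
    have hlt : ((m : ℕ∞) : WithTop ℕ∞) < ((⊤ : ℕ∞) : WithTop ℕ∞) := by
      exact_mod_cast WithTop.coe_lt_coe.mpr (ENat.coe_lt_top m)
    have hfd : HasFDerivAt (fun y => P y m) (P x (m + 1)).curryLeft x :=
      (hP.fderivWithin m hlt x hx).hasFDerivAt hmem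
    have h2 : HasFDerivAt (fun y => P y m (fun _ => ((1 : ℝ), (0 : ℝ))))
        ((P x (m + 1)).curryLeft.flipMultilinear (fun _ => (1, 0))) x :=
      hfd.continuousMultilinear_apply_const _
    have heq : pS^[m] g =ᶠ[nhds x] fun y => P y m (fun _ => (1, 0)) :=
      Filter.eventuallyEq_of_mem hmem (fun y hy => ih y hy)
    rw [Function.iterate_succ_apply']
    show fderiv ℝ (pS^[m] g) x (1, 0) = _
    rw [heq.fderiv_eq, h2.fderiv]
    show P x (m + 1) (Fin.cons (1, 0) (fun _ => (1, 0))) = P x (m + 1) (fun _ => (1, 0))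
    congr 1
    funext i
    refine Fin.cases rfl (fun _ => rfl) i

/-- Iterated derivatives of `φ` at `0` in directions in `W` lie in `W`. -/
lemma iterated_mem_Wk {n k : ℕ} {φ : (Fin n → ℂ) → (Fin n → ℂ)}
    (hφs : ContDiff ℝ (⊤ : ℕ∞) φ)
    (hφW : ∀ x ∈ Wk n k, φ x ∈ Wk n k) (m : ℕ)
    (w : Fin m → (Fin n → ℂ)) (hw : ∀ j, w j ∈ Wk n k) :
    iteratedFDeriv ℝ m φ 0 w ∈ Wk n k := by
  intro i hi
  set Pr : (Fin n → ℂ) →L[ℝ] (Fin n → ℂ) :=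
    ContinuousLinearMap.pi (fun j : Fin n =>
      if (j : ℕ) < k then ContinuousLinearMap.proj j else 0) with hPr
  have hPrApply : ∀ x (j : Fin n), Pr x j = if (j : ℕ) < k then x j else 0 := by
    intro x j
    simp only [hPr, ContinuousLinearMap.pi_apply]
    split <;> simp_all
  have hPrW : ∀ x, Pr x ∈ Wk n k := by
    intro x j hj
    rw [hPrApply]
    rw [if_neg (by omega)]
  have hPrId : ∀ x ∈ Wk n k, Pr x = x := by
    intro x hx
    funext j
    rw [hPrApply]
    by_cases hj : (j : ℕ) < k
    · rw [if_pos hj]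
    · rw [if_neg hj, hx j (by omega)]
  set πi : (Fin n → ℂ) →L[ℝ] ℂ := ContinuousLinearMap.proj i with hπi
  have hzero : (⇑πi ∘ (φ ∘ ⇑Pr)) = fun _ => (0 : ℂ) := by
    funext x
    exact hφW (Pr x) (hPrW x) i hi
  have hφPr : ContDiff ℝ (⊤ : ℕ∞) (φ ∘ ⇑Pr) := hφs.comp Pr.contDiff
  have e1 : iteratedFDeriv ℝ m (⇑πi ∘ (φ ∘ ⇑Pr)) 0 w
      = πi (iteratedFDeriv ℝ m (φ ∘ ⇑Pr) 0 w) := by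
    rw [πi.iteratedFDeriv_comp_left (x := 0) hφPr.contDiffAt (by exact_mod_cast (le_top : (m : ℕ∞) ≤ ⊤))]
    rfl
  have e2 : iteratedFDeriv ℝ m (φ ∘ ⇑Pr) 0 w
      = iteratedFDeriv ℝ m φ (Pr 0) (fun j => Pr (w j)) := by
    rw [Pr.iteratedFDeriv_comp_right hφs 0 (by exact_mod_cast (le_top : (m : ℕ∞) ≤ ⊤))]
    rfl
  have e3 : iteratedFDeriv ℝ m (⇑πi ∘ (φ ∘ ⇑Pr)) 0 w = 0 := by
    rw [hzero]
    rw [iteratedFDeriv_zero_fun]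
    rfl
  have hwe : (fun j => Pr (w j)) = w := funext fun j => hPrId (w j) (hw j)
  have h4 : πi (iteratedFDeriv ℝ m (φ ∘ ⇑Pr) 0 w) = 0 := e1.symm.trans e3
  rw [e2, map_zero, hwe] at h4
  exact h4

end Aux

open Set Function in
theorem stmt4 (n k : ℕ) (hn : 1 ≤ n) (hk : k ≤ n - 1)
    (φ : (Fin n → ℂ) → (Fin n → ℂ))
    (hφsmooth : ContDiff ℝ (⊤ : ℕ∞) φ)
    (hφ0 : φ 0 = 0)
    (hφW : ∀ x ∈ Wk n k, φ x ∈ Wk n k)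
    (U : Set (ℝ × ℝ)) (hU : IsOpen U) (h0 : (0, 0) ∈ U)
    (f : ℝ × ℝ → (Fin n → ℂ)) (hf : ContDiffOn ℝ (⊤ : ℕ∞) f U)
    (ℓ : ℕ) (hℓ : 1 ≤ ℓ)
    (hf0 : f (0, 0) = 0)
    (hjets : ∀ i j : ℕ, 1 ≤ i + j → i + j ≤ ℓ - 1 → pD f i j (0, 0) ∈ Wk n k) :
    pD (φ ∘ f) ℓ 0 (0, 0) - fderiv ℝ φ 0 (pD f ℓ 0 (0, 0)) ∈ Wk n k := by
  classical
  have hℓpos : 0 < ℓ := hℓ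
  have hpD : ∀ (g : ℝ × ℝ → (Fin n → ℂ)) (m : ℕ), pD g m 0 = pS^[m] g := by
    intro g m
    simp [pD]
  set p := ftaylorSeriesWithin ℝ f U with hpdef
  have hp : HasFTaylorSeriesUpToOn (⊤ : ℕ∞) f p U := hf.ftaylorSeriesWithin hU.uniqueDiffOn
  set q := ftaylorSeries ℝ φ with hqdef
  have hq : HasFTaylorSeriesUpTo (⊤ : ℕ∞) φ q := contDiff_iff_ftaylorSeries.mp hφsmooth
  have hqOn : HasFTaylorSeriesUpToOn (⊤ : ℕ∞) φ q univ := hq.hasFTaylorSeriesUpToOn univ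
  have hcomp : HasFTaylorSeriesUpToOn (⊤ : ℕ∞) (φ ∘ f)
      (fun x => (q (f x)).taylorComp (p x)) U := hqOn.comp hp (mapsTo_univ f U)
  have hqIter : ∀ (m : ℕ) (w : Fin m → (Fin n → ℂ)), q 0 m w = iteratedFDeriv ℝ m φ 0 w :=
    fun m w => rfl
  -- bridge
  have hbrf : ∀ m : ℕ, pD f m 0 (0, 0) = p (0, 0) m (fun _ => (1, 0)) := by
    intro m
    rw [hpD]
    exact pS_iterate_eq_taylor hU hp m (0, 0) h0
  have hbrc : pD (φ ∘ f) ℓ 0 (0, 0)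
      = (q (f (0, 0))).taylorComp (p (0, 0)) ℓ (fun _ => (1, 0)) := by
    rw [hpD]
    exact pS_iterate_eq_taylor hU hcomp ℓ (0, 0) h0
  set v : Fin ℓ → ℝ × ℝ := fun _ => (1, 0) with hv
  set T : OrderedFinpartition ℓ → (Fin n → ℂ) :=
    fun c => (q (f (0, 0))).compAlongOrderedFinpartition (p (0, 0)) c v with hT
  have hsum : pD (φ ∘ f) ℓ 0 (0, 0) = ∑ c : OrderedFinpartition ℓ, T c := by
    rw [hbrc]
    rw [FormalMultilinearSeries.taylorComp]
    rw [ContinuousMultilinearMap.sum_apply]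
  set c0 := OrderedFinpartition.single ℓ hℓpos with hc0
  have hTc0 : T c0 = fderiv ℝ φ 0 (pD f ℓ 0 (0, 0)) := by
    have : T c0 = q (f (0, 0)) 1 (fun _ => p (0, 0) ℓ (fun _ => (1, 0))) := rfl
    rw [this, hf0, hqIter, iteratedFDeriv_one_apply, hbrf]
  have hTmem : ∀ c : OrderedFinpartition ℓ, c ≠ c0 → T c ∈ Wk n k := by
    intro c hc
    have hlen1 : c.length ≠ 1 := fun h => hc (c.eq_single hℓpos h)
    have hlen2 : 2 ≤ c.length := by
      have := c.length_pos hℓpos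
      omega
    -- each part has size between 1 and ℓ - 1
    have hsize : ∀ m : Fin c.length, 1 ≤ c.partSize m ∧ c.partSize m ≤ ℓ - 1 := by
      intro m
      refine ⟨c.partSize_pos m, ?_⟩
      obtain ⟨m1, hm1⟩ := Fintype.exists_ne_of_one_lt_card (by simp; omega) m
      have hpair : c.partSize m + c.partSize m1 ≤ ℓ := by
        have hsub : ({m, m1} : Finset (Fin c.length)) ⊆ Finset.univ := Finset.subset_univ _
        have := Finset.sum_le_sum_of_subset (f := c.partSize) hsub
        rw [Finset.sum_pair (Ne.symm hm1)] at this
        rw [c.sum_partSize] at this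
        exact this
      have := c.partSize_pos m1
      omega
    have hargs : ∀ m : Fin c.length,
        c.applyOrderedFinpartition (fun m => p (0, 0) (c.partSize m)) v m ∈ Wk n k := by
      intro m
      have : c.applyOrderedFinpartition (fun m => p (0, 0) (c.partSize m)) v m
          = p (0, 0) (c.partSize m) (fun _ => (1, 0)) := rfl
      obtain ⟨ha, hb⟩ := hsize m
      rw [this, ← hbrf]
      exact hjets (c.partSize m) 0 (by omega) (by omega)
    have heq : T c = q (f (0, 0)) c.length
        (c.applyOrderedFinpartition (fun m => p (0, 0) (c.partSize m)) v) := rfl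
    rw [heq, hf0, hqIter]
    exact iterated_mem_Wk hφsmooth hφW c.length _ hargs
  have hsplit : pD (φ ∘ f) ℓ 0 (0, 0)
      = fderiv ℝ φ 0 (pD f ℓ 0 (0, 0)) + ∑ c ∈ Finset.univ.erase c0, T c := by
    rw [hsum, ← hTc0]
    exact (Finset.add_sum_erase Finset.univ T (Finset.mem_univ c0)).symm
  intro i hi
  have hSmem : (∑ c ∈ Finset.univ.erase c0, T c) i = 0 := by
    rw [Finset.sum_apply]
    apply Finset.sum_eq_zero
    intro c hc
    exact hTmem c (Finset.ne_of_mem_erase hc) i hi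
  show (pD (φ ∘ f) ℓ 0 (0, 0) - fderiv ℝ φ 0 (pD f ℓ 0 (0, 0))) i = 0
  rw [Pi.sub_apply, hsplit, Pi.add_apply, hSmem, add_zero, sub_self]
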